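/- Let 0 < α < 1 and let w_n^(α) = (−1)^n·C(α,n) be the Grünwald weights. Then for every integer n ≥ 2: ((1−α)/5)·(2/n)^α < Σ_{k=n}^∞ |w_k^(α)| < 2·(2/n)^α. -/

import Mathlib

open Finset Filter Real Topology

/-- The Grünwald weights `w_n^(α) = (-1)^n * C(α, n)`. -/
noncomputable def grunwaldW (α : ℝ) (n : ℕ) : ℝ :=
  (-1) ^ n * (Real.Gamma (α + 1) / (Real.Gamma ((n : ℝ) + 1) * Real.Gamma (α - (n : ℝ) + 1)))

/-- Partial products `∏_{j=1}^{n} (1 - α/j)`. -/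
noncomputable def gP (α : ℝ) (n : ℕ) : ℝ := ∏ j ∈ Finset.range n, (1 - α / ((j : ℝ) + 1))

lemma gP_succ (α : ℝ) (n : ℕ) : gP α (n+1) = gP α n * (1 - α / ((n:ℝ)+1)) :=
  Finset.prod_range_succ _ _

lemma gP_pos {α : ℝ} (hα0 : 0 < α) (hα1 : α < 1) (n : ℕ) : 0 < gP α n := by
  apply Finset.prod_pos
  intro j _
  have h0 : (0:ℝ) ≤ (j:ℝ) := Nat.cast_nonneg j
  have h1 : α / ((j:ℝ)+1) ≤ α := div_le_self hα0.le (by linarith)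
  linarith

lemma alpha_sub_ne {α : ℝ} (hα0 : 0 < α) (hα1 : α < 1) (m : ℕ) :
    ∀ k : ℕ, α - (m:ℝ) ≠ -(k:ℝ) := by
  intro k h
  rcases le_or_gt m k with h' | h'
  · have : (m:ℝ) ≤ (k:ℝ) := Nat.cast_le.mpr h'
    linarith
  · have : (k:ℝ) + 1 ≤ (m:ℝ) := by exact_mod_cast Nat.succ_le_of_lt h'
    linarith

lemma grunwaldW_succ {α : ℝ} (hα0 : 0 < α) (hα1 : α < 1) (m : ℕ) :
    grunwaldW α (m+1) = grunwaldW α m * (((m:ℝ) - α) / ((m:ℝ)+1)) := by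
  have hne : ∀ k : ℕ, α - (m:ℝ) ≠ -(k:ℝ) := alpha_sub_ne hα0 hα1 m
  have hm0 : α - (m:ℝ) ≠ 0 := by simpa using hne 0
  have hG1 : Real.Gamma (α - (m:ℝ) + 1) = (α - (m:ℝ)) * Real.Gamma (α - (m:ℝ)) :=
    Real.Gamma_add_one hm0
  have hG2 : Real.Gamma ((m:ℝ) + 1 + 1) = ((m:ℝ)+1) * Real.Gamma ((m:ℝ)+1) :=
    Real.Gamma_add_one (by positivity)
  have hGm : (0:ℝ) < Real.Gamma ((m:ℝ)+1) := Real.Gamma_pos_of_pos (by positivity)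
  have hGa : Real.Gamma (α - (m:ℝ)) ≠ 0 := Real.Gamma_ne_zero hne
  have hm1 : ((m:ℝ)+1) ≠ 0 := by positivity
  unfold grunwaldW
  push_cast
  rw [show α - ((m:ℝ)+1) + 1 = α - (m:ℝ) by ring, hG2]
  rw [hG1]
  field_simp
  ring

lemma grunwaldW_eq {α : ℝ} (hα0 : 0 < α) (hα1 : α < 1) :
    ∀ m : ℕ, grunwaldW α (m+1) = -(α/((m:ℝ)+1)) * gP α m := by
  intro m
  induction m with
  | zero =>
      have h1 := grunwaldW_succ hα0 hα1 0
      have h0 : grunwaldW α 0 = 1 := by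
        have hG : Real.Gamma (α + 1) ≠ 0 := (Real.Gamma_pos_of_pos (by linarith)).ne'
        simp [grunwaldW, Real.Gamma_one]
        field_simp
        exact hG
      rw [h1, h0]
      simp [gP]
  | succ m ih =>
      have h1 := grunwaldW_succ hα0 hα1 (m+1)
      rw [h1, ih, gP_succ]
      have hm1 : ((m:ℝ)+1) ≠ 0 := by positivity
      have hm2 : ((m:ℝ)+2) ≠ 0 := by positivity
      push_cast
      field_simp

lemma abs_grunwaldW {α : ℝ} (hα0 : 0 < α) (hα1 : α < 1) (m : ℕ) :
    |grunwaldW α (m+1)| = gP α m - gP α (m+1) := by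
  rw [grunwaldW_eq hα0 hα1 m, gP_succ]
  have hp := gP_pos hα0 hα1 m
  have hm1 : (0:ℝ) < (m:ℝ)+1 := by positivity
  have hnn : (0:ℝ) ≤ (α/((m:ℝ)+1)) * gP α m := by positivity
  rw [neg_mul, abs_neg, abs_of_nonneg hnn]
  ring

lemma log_add_one_le_sum (n : ℕ) :
    Real.log ((n:ℝ)+1) ≤ ∑ j ∈ Finset.range n, 1/((j:ℝ)+1) := by
  have ht := Finset.sum_range_sub (fun j : ℕ => Real.log ((j:ℝ)+1)) n
  simp only [Nat.cast_zero, zero_add, Real.log_one, sub_zero] at ht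
  rw [← ht]
  apply Finset.sum_le_sum
  intro j _
  have h1 : (0:ℝ) < (j:ℝ)+1 := by positivity
  have h2 : (0:ℝ) < (j:ℝ)+2 := by positivity
  have key : Real.log (((j:ℝ)+2)/((j:ℝ)+1)) ≤ ((j:ℝ)+2)/((j:ℝ)+1) - 1 :=
    Real.log_le_sub_one_of_pos (by positivity)
  rw [Real.log_div h2.ne' h1.ne'] at key
  have h3 : ((j:ℝ)+2)/((j:ℝ)+1) - 1 = 1/((j:ℝ)+1) := by field_simp; norm_num
  push_cast
  rw [show (j:ℝ)+1+1 = (j:ℝ)+2 by ring]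
  linarith [key, h3.le]

lemma gP_le_rpow {α : ℝ} (hα0 : 0 < α) (hα1 : α < 1) (n : ℕ) :
    gP α n ≤ ((n:ℝ)+1) ^ (-α) := by
  have h1 : gP α n ≤ ∏ j ∈ Finset.range n, Real.exp (-(α/((j:ℝ)+1))) := by
    apply Finset.prod_le_prod
    · intro j _
      have h0 : (0:ℝ) ≤ (j:ℝ) := Nat.cast_nonneg j
      have : α / ((j:ℝ)+1) ≤ α := div_le_self hα0.le (by linarith)
      linarith
    · intro j _
      have := Real.add_one_le_exp (-(α/((j:ℝ)+1)))
      linarith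
  rw [← Real.exp_sum] at h1
  have hsum : ∑ j ∈ Finset.range n, -(α/((j:ℝ)+1))
      = -α * ∑ j ∈ Finset.range n, 1/((j:ℝ)+1) := by
    rw [Finset.mul_sum]
    exact Finset.sum_congr rfl (fun j _ => by ring)
  have h2 : Real.exp (∑ j ∈ Finset.range n, -(α/((j:ℝ)+1)))
      ≤ Real.exp (-α * Real.log ((n:ℝ)+1)) := by
    apply Real.exp_le_exp.mpr
    rw [hsum]
    have := log_add_one_le_sum n
    nlinarith
  have h3 : ((n:ℝ)+1) ^ (-α) = Real.exp (-α * Real.log ((n:ℝ)+1)) := by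
    rw [Real.rpow_def_of_pos (by positivity)]
    ring_nf
  linarith [h1, h2, h3.ge]

lemma hasSum_tail {α : ℝ} (hα0 : 0 < α) (hα1 : α < 1) (m : ℕ) :
    HasSum (fun k => |grunwaldW α (m + 1 + k)|) (gP α m) := by
  rw [hasSum_iff_tendsto_nat_of_nonneg (fun k => abs_nonneg _)]
  have hps : ∀ K, ∑ k ∈ Finset.range K, |grunwaldW α (m+1+k)| = gP α m - gP α (m+K) := by
    intro K
    have : ∀ k, |grunwaldW α (m+1+k)| = gP α (m+k) - gP α (m+k+1) := by
      intro k
      rw [show m+1+k = (m+k)+1 by omega]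
      exact abs_grunwaldW hα0 hα1 (m+k)
    rw [Finset.sum_congr rfl (fun k _ => this k)]
    have := Finset.sum_range_sub' (fun k => gP α (m+k)) K
    simpa [add_assoc] using this
  simp only [hps]
  have h0 : Tendsto (fun K : ℕ => gP α (m+K)) atTop (𝓝 0) := by
    apply squeeze_zero (fun K => (gP_pos hα0 hα1 _).le)
      (fun K => gP_le_rpow hα0 hα1 (m+K))
    have h1 : Tendsto (fun x : ℝ => x ^ (-α)) atTop (𝓝 0) := tendsto_rpow_neg_atTop hα0
    have h2 : Tendsto (fun K : ℕ => ((m+K:ℕ):ℝ)+1) atTop atTop := by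
      apply tendsto_atTop_add_const_right
      have := (tendsto_natCast_atTop_atTop (R := ℝ)).comp (tendsto_add_atTop_nat m)
      convert this using 2 with x
      simp only [Function.comp_apply]
      push_cast; ring
    exact h1.comp h2
  have h3 : Tendsto (fun K : ℕ => gP α m - gP α (m+K)) atTop (𝓝 (gP α m - 0)) :=
    tendsto_const_nhds.sub h0
  simpa using h3

lemma exp_le_one_sub {α : ℝ} (hα0 : 0 < α) (hα1 : α < 1) {i : ℝ} (hi : 3 ≤ i) :
    Real.exp (-(α/i + α^2/(i*(i-1)))) ≤ 1 - α/i := by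
  have hi0 : (0:ℝ) < i := by linarith
  have hi1 : (0:ℝ) < i - 1 := by linarith
  set s := α/i + α^2/(i*(i-1)) with hs
  have hs0 : 0 < s := by positivity
  have h1 : s + 1 ≤ Real.exp s := Real.add_one_le_exp s
  have hprod : Real.exp (-s) * Real.exp s = 1 := by
    rw [← Real.exp_add]; simp
  have key : 1 ≤ (1 - α/i) * (1 + s) := by
    have e1 : (1 - α/i) * (1 + (α/i + α^2/(i*(i-1)))) - 1
        = α^2*(1-α)/(i^2*(i-1)) := by
      field_simp
      ring
    have e2 : (0:ℝ) ≤ α^2*(1-α)/(i^2*(i-1)) := by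
      have : (0:ℝ) ≤ 1 - α := by linarith
      positivity
    rw [hs]
    linarith [e1, e2]
  have h2 : Real.exp (-s) * (1+s) ≤ 1 := by
    nlinarith [mul_le_mul_of_nonneg_left h1 (Real.exp_pos (-s)).le]
  have h3 : Real.exp (-s) * (1+s) ≤ (1 - α/i) * (1+s) := le_trans h2 key
  exact le_of_mul_le_mul_right h3 (by linarith)

lemma gP_split (α : ℝ) (K : ℕ) :
    gP α (K+2) = (∏ j ∈ Finset.range K, (1 - α/((j:ℝ)+3))) * (1 - α/2) * (1 - α) := by
  unfold gP
  rw [Finset.prod_range_succ', Finset.prod_range_succ']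
  have e : ∀ x ∈ Finset.range K, (1 : ℝ) - α / (((x + 1 + 1 : ℕ) : ℝ) + 1) = 1 - α / ((x:ℝ)+3) := by
    intro x _; push_cast; ring_nf
  rw [Finset.prod_congr rfl e]
  push_cast
  ring

lemma sum_inv_le_log (α : ℝ) (hα0 : 0 < α) (K : ℕ) :
    ∑ j ∈ Finset.range K, α/((j:ℝ)+3) ≤ α * (Real.log ((K:ℝ)+2) - Real.log 2) := by
  have ht := Finset.sum_range_sub (fun j : ℕ => Real.log ((j:ℝ)+2)) K
  simp only [Nat.cast_zero, zero_add] at ht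
  have h1 : ∑ j ∈ Finset.range K, α/((j:ℝ)+3)
      ≤ ∑ j ∈ Finset.range K, α * (Real.log ((j:ℝ)+3) - Real.log ((j:ℝ)+2)) := by
    apply Finset.sum_le_sum
    intro j _
    have h2 : (0:ℝ) < (j:ℝ)+2 := by positivity
    have h3 : (0:ℝ) < (j:ℝ)+3 := by positivity
    have key : Real.log (((j:ℝ)+2)/((j:ℝ)+3)) ≤ ((j:ℝ)+2)/((j:ℝ)+3) - 1 :=
      Real.log_le_sub_one_of_pos (by positivity)
    rw [Real.log_div h2.ne' h3.ne'] at key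
    have h4 : ((j:ℝ)+2)/((j:ℝ)+3) - 1 = -(1/((j:ℝ)+3)) := by field_simp; ring
    rw [h4] at key
    have h5 : 1/((j:ℝ)+3) ≤ Real.log ((j:ℝ)+3) - Real.log ((j:ℝ)+2) := by linarith
    have := mul_le_mul_of_nonneg_left h5 hα0.le
    calc α/((j:ℝ)+3) = α * (1/((j:ℝ)+3)) := by ring
      _ ≤ _ := this
  rw [← Finset.mul_sum] at h1
  calc ∑ j ∈ Finset.range K, α/((j:ℝ)+3) ≤ _ := h1
    _ = α * (Real.log ((K:ℝ)+2) - Real.log 2) := by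
        congr 1
        rw [← ht]
        apply Finset.sum_congr rfl
        intro j _
        push_cast
        ring_nf

lemma sum_sq_le (α : ℝ) (K : ℕ) :
    ∑ j ∈ Finset.range K, α^2/(((j:ℝ)+3)*((j:ℝ)+2)) ≤ α^2/2 := by
  have ht := Finset.sum_range_sub' (fun j : ℕ => α^2/((j:ℝ)+2)) K
  simp only [Nat.cast_zero, zero_add] at ht
  have h1 : ∑ j ∈ Finset.range K, α^2/(((j:ℝ)+3)*((j:ℝ)+2))
      = α^2/2 - α^2/((K:ℝ)+2) := by
    rw [← ht]
    apply Finset.sum_congr rfl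
    intro j _
    have h2 : ((j:ℝ)+2) ≠ 0 := by positivity
    have h3 : ((j:ℝ)+3) ≠ 0 := by positivity
    push_cast
    rw [show (j:ℝ)+1+2 = (j:ℝ)+3 by ring]
    field_simp
    ring
  rw [h1]
  have : (0:ℝ) < (K:ℝ)+2 := by positivity
  have : 0 ≤ α^2/((K:ℝ)+2) := by positivity
  linarith

lemma gP_lower {α : ℝ} (hα0 : 0 < α) (hα1 : α < 1) (K : ℕ) :
    (1-α) * (1-α/2) * Real.exp (-(α^2/2)) * (2:ℝ)^α * (((K:ℝ)+2) ^ (-α)) ≤ gP α (K+2) := by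
  have hQ : Real.exp (∑ j ∈ Finset.range K, -(α/((j:ℝ)+3) + α^2/(((j:ℝ)+3)*((j:ℝ)+2))))
      ≤ ∏ j ∈ Finset.range K, (1 - α/((j:ℝ)+3)) := by
    rw [Real.exp_sum]
    apply Finset.prod_le_prod
    · intro j _; positivity
    · intro j _
      have h3 : (3:ℝ) ≤ (j:ℝ)+3 := by
        have : (0:ℝ) ≤ (j:ℝ) := Nat.cast_nonneg j
        linarith
      have := exp_le_one_sub hα0 hα1 h3
      rw [show ((j:ℝ)+3) - 1 = (j:ℝ)+2 by ring] at this
      exact this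
  have hsum : -(α * (Real.log ((K:ℝ)+2) - Real.log 2) + α^2/2)
      ≤ ∑ j ∈ Finset.range K, -(α/((j:ℝ)+3) + α^2/(((j:ℝ)+3)*((j:ℝ)+2))) := by
    have h1 := sum_inv_le_log α hα0 K
    have h2 := sum_sq_le α K
    have h3 : ∑ j ∈ Finset.range K, -(α/((j:ℝ)+3) + α^2/(((j:ℝ)+3)*((j:ℝ)+2)))
        = -(∑ j ∈ Finset.range K, α/((j:ℝ)+3) + ∑ j ∈ Finset.range K, α^2/(((j:ℝ)+3)*((j:ℝ)+2))) := by
      rw [← Finset.sum_add_distrib, ← Finset.sum_neg_distrib]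
    rw [h3]
    linarith
  have hexp : Real.exp (-(α * (Real.log ((K:ℝ)+2) - Real.log 2) + α^2/2))
      = Real.exp (-(α^2/2)) * (2:ℝ)^α * (((K:ℝ)+2) ^ (-α)) := by
    rw [Real.rpow_def_of_pos (by norm_num : (0:ℝ) < 2),
        Real.rpow_def_of_pos (by positivity : (0:ℝ) < (K:ℝ)+2),
        ← Real.exp_add, ← Real.exp_add]
    congr 1
    ring
  have hmono := Real.exp_le_exp.mpr hsum
  rw [hexp] at hmono
  have hchain := le_trans hmono hQ
  rw [gP_split]
  have hpos1 : (0:ℝ) < 1 - α := by linarith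
  have hpos2 : (0:ℝ) < 1 - α/2 := by linarith
  nlinarith [hchain, mul_pos hpos1 hpos2, Real.exp_pos (-(α^2/2)),
    Real.rpow_pos_of_pos (by norm_num : (0:ℝ) < 2) α,
    Real.rpow_pos_of_pos (by positivity : (0:ℝ) < (K:ℝ)+2) (-α)]

lemma const_lower {α : ℝ} (hα0 : 0 < α) (hα1 : α < 1) :
    (1:ℝ)/5 < (1 - α/2) * Real.exp (-(α^2/2)) := by
  have h1 : Real.exp (-(1/2):ℝ) ≤ Real.exp (-(α^2/2)) := by
    apply Real.exp_le_exp.mpr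
    nlinarith
  have h2 : Real.exp ((1/2):ℝ) < 2.5 := by
    have he : Real.exp 1 < 2.7182818286 := Real.exp_one_lt_d9
    have hsq : Real.exp (1/2) * Real.exp (1/2) = Real.exp 1 := by
      rw [← Real.exp_add]; norm_num
    nlinarith [Real.exp_pos ((1:ℝ)/2)]
  have h3 : (2:ℝ)/5 < Real.exp (-(1/2):ℝ) := by
    have hp : Real.exp (-(1/2):ℝ) * Real.exp ((1/2):ℝ) = 1 := by
      rw [← Real.exp_add]; norm_num
    nlinarith [Real.exp_pos (-(1/2):ℝ), Real.exp_pos ((1:ℝ)/2)]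
  have h4 : (1:ℝ)/2 < 1 - α/2 := by linarith
  nlinarith [Real.exp_pos (-(α^2/2))]

/-- bounds for the tail sums `Σ_{k=n}^∞ |w_k^(α)|` of Grünwald weights. -/
theorem grunwaldW_tail_bounds (α : ℝ) (hα0 : 0 < α) (hα1 : α < 1) :
    ∀ n : ℕ, 2 ≤ n →
      (1 - α) / 5 * (2 / (n : ℝ)) ^ α < ∑' k : ℕ, |grunwaldW α (n + k)| ∧
      ∑' k : ℕ, |grunwaldW α (n + k)| < 2 * (2 / (n : ℝ)) ^ α := by
  intro n hn
  obtain ⟨m, rfl⟩ : ∃ m, n = m + 2 := ⟨n - 2, by omega⟩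
  have hsum : HasSum (fun k => |grunwaldW α (m + 2 + k)|) (gP α (m+1)) := by
    have h := hasSum_tail hα0 hα1 (m+1)
    have he : ∀ k : ℕ, m+1+1+k = m+2+k := fun k => by omega
    simpa [he] using h
  rw [hsum.tsum_eq]
  have hcast : ((m+2:ℕ):ℝ) = (m:ℝ)+2 := by push_cast; ring
  rw [hcast]
  have hm2 : (0:ℝ) < (m:ℝ)+2 := by positivity
  have hsplit : (2/((m:ℝ)+2))^α = (2:ℝ)^α * (((m:ℝ)+2)^α)⁻¹ := by
    rw [Real.div_rpow (by norm_num) hm2.le, div_eq_mul_inv]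
  have hrpos : (0:ℝ) < ((m:ℝ)+2)^α := Real.rpow_pos_of_pos hm2 α
  have htwo : (1:ℝ) ≤ (2:ℝ)^α := Real.one_le_rpow (by norm_num) hα0.le
  constructor
  · -- lower bound
    rcases Nat.eq_zero_or_pos m with hm | hm
    · subst hm
      have hg1 : gP α (0+1) = 1 - α := by
        simp [gP]
      rw [hg1]
      norm_num
      linarith
    · obtain ⟨K, rfl⟩ : ∃ K, m = K + 1 := ⟨m - 1, by omega⟩
      have hL := gP_lower hα0 hα1 K
      have hK2 : (0:ℝ) < (K:ℝ)+2 := by positivity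
      have hK3 : (0:ℝ) < (K:ℝ)+3 := by positivity
      have hmono : ((K:ℝ)+3)^(-α) ≤ ((K:ℝ)+2)^(-α) := by
        rw [Real.rpow_neg hK2.le, Real.rpow_neg hK3.le]
        have h := Real.rpow_le_rpow hK2.le (by linarith : ((K:ℝ)+2) ≤ (K:ℝ)+3) hα0.le
        have hp : 0 < ((K:ℝ)+2)^α := Real.rpow_pos_of_pos hK2 α
        exact inv_anti₀ hp h
      have hc := const_lower hα0 hα1
      have h1a : (0:ℝ) < 1 - α := by linarith
      have htwo' : (0:ℝ) < (2:ℝ)^α := Real.rpow_pos_of_pos (by norm_num) α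
      have ha3 : (0:ℝ) < ((K:ℝ)+3)^(-α) := Real.rpow_pos_of_pos hK3 _
      have hint1 : 0 < ((1-α/2)*Real.exp (-(α^2/2)) - 1/5) * ((1-α) * ((2:ℝ)^α * ((K:ℝ)+3)^(-α))) := by
        apply mul_pos (by linarith) (by positivity)
      have hint2 : 0 ≤ ((1-α) * ((1-α/2)*Real.exp (-(α^2/2))) * (2:ℝ)^α) * (((K:ℝ)+2)^(-α) - ((K:ℝ)+3)^(-α)) := by
        apply mul_nonneg
        · have : (0:ℝ) < 1 - α/2 := by linarith
          positivity
        · linarith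
      have hgoal2 : gP α (K+1+1) = gP α (K+2) := by norm_num
      have hidx : ((K+1:ℕ):ℝ) + 2 = (K:ℝ)+3 := by push_cast; ring
      rw [hidx, hgoal2]
      have hs2 : (2/((K:ℝ)+3))^α = (2:ℝ)^α * ((K:ℝ)+3)^(-α) := by
        rw [Real.div_rpow (by norm_num) hK3.le, Real.rpow_neg hK3.le, div_eq_mul_inv]
      rw [hs2]
      nlinarith [hL, hint1, hint2]
  · -- upper bound
    have hU : gP α (m+1) ≤ ((m:ℝ)+2)^(-α) := by
      have := gP_le_rpow hα0 hα1 (m+1)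
      have hc2 : ((m+1:ℕ):ℝ) + 1 = (m:ℝ)+2 := by push_cast; ring
      rwa [hc2] at this
    rw [hsplit]
    have hinv : (0:ℝ) < (((m:ℝ)+2)^α)⁻¹ := by positivity
    have hneg : ((m:ℝ)+2)^(-α) = (((m:ℝ)+2)^α)⁻¹ := Real.rpow_neg hm2.le α
    rw [hneg] at hU
    nlinarith [hU, hinv, htwo]
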